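/- arXiv:1107.0919 — 5 statements merged into one kernel-verified Lean document; each statement's English description precedes it below -/
import Mathlib

section
/- Let G1 and G2 be labelled graphs over the same finite set of actions Σ, with node sets V1 and V2. Let n, k ∈ ℕ, let ū = (u1,…,uk) ∈ V1^k, v̄ = (v1,…,vk) ∈ V2^k, u ∈ V1 and v ∈ V2 be such that u ∉ S_{2n+1}(G1, ū) and v ∉ S_{2n+1}(G2, v̄). If f : S_n(G1, ū) → S_n(G2, v̄) and f' : S_n(G1, u) → S_n(G2, v) are isomorphisms, then the combined map f ⊎ f' : S_n(G1, u, ū) → S_n(G2, v, v̄) is an isomorphism. -/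
/-- One (undirected) step in a labelled graph: an edge in either direction. -/
def ustep {V S : Type*} (G : S → V → V → Prop) (x y : V) : Prop := ∃ a, G a x y ∨ G a y x

/-- `reach E n u v` holds iff there is a path of length at most `n` from `u` to `v`
along the relation `E`, i.e. iff the `E`-distance of `u` and `v` is at most `n`. -/
def reach {V : Type*} (E : V → V → Prop) : ℕ → V → V → Prop
  | 0, u, v => u = v
  | n + 1, u, v => u = v ∨ ∃ w, E u w ∧ reach E n w v

/-- The sphere `S_n(G, u)` of radius `n` around `u` in the labelled graph `G`:
all nodes of undirected distance at most `n` from `u`. -/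
def sphere {V S : Type*} (G : S → V → V → Prop) (n : ℕ) (u : V) : Set V :=
  {v | reach (ustep G) n u v}

/-- `f` is an isomorphism from the substructure of the labelled graph `G1` induced by `S1`
onto the substructure of the labelled graph `G2` induced by `S2`. -/
def SphIso {V1 V2 S : Type*} (G1 : S → V1 → V1 → Prop) (G2 : S → V2 → V2 → Prop)
    (S1 : Set V1) (S2 : Set V2) (f : V1 → V2) : Prop :=
  Set.BijOn f S1 S2 ∧ ∀ a, ∀ x ∈ S1, ∀ y ∈ S1, (G1 a x y ↔ G2 a (f x) (f y))

/-- The lifting of an edge relation on `V` to nonempty words over `V` (the graph `G⁺`):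
a single letter is rewritten. -/
def liftRel {V S : Type*} (G : S → V → V → Prop) (a : S) (w w' : List V) : Prop :=
  ∃ (x y : List V) (s s' : V), G a s s' ∧ w = x ++ s :: y ∧ w' = x ++ s' :: y

section helpers
variable {V S : Type*} {E : V → V → Prop}

lemma reach_refl (n : ℕ) (x : V) : reach E n x x := by
  cases n with
  | zero => rfl
  | succ n => exact Or.inl rfl

lemma reach_succ {n : ℕ} {x y : V} (h : reach E n x y) : reach E (n+1) x y := by
  induction n generalizing x with
  | zero => exact Or.inl h
  | succ n ih =>
    rcases h with h | ⟨w, e, r⟩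
    · exact Or.inl h
    · exact Or.inr ⟨w, e, ih r⟩

lemma reach_mono {m n : ℕ} (h : m ≤ n) {x y : V} (hr : reach E m x y) : reach E n x y := by
  induction h with
  | refl => exact hr
  | step _ ih => exact reach_succ ih

lemma reach_trans {m n : ℕ} {x y z : V} (h1 : reach E m x y) (h2 : reach E n y z) :
    reach E (m + n) x z := by
  induction m generalizing x with
  | zero =>
    have hxy : x = y := h1
    subst hxy
    exact reach_mono (by omega) h2
  | succ m ih =>
    rcases h1 with h | ⟨w, e, r⟩
    · subst h; exact reach_mono (by omega) h2
    · have h3 : reach E (m + n + 1) x z := Or.inr ⟨w, e, ih r⟩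
      exact reach_mono (by omega) h3

lemma reach_snoc {n : ℕ} {x y z : V} (h : reach E n x y) (e : E y z) : reach E (n+1) x z := by
  induction n generalizing x with
  | zero =>
    have hxy : x = y := h
    subst hxy
    exact Or.inr ⟨z, e, rfl⟩
  | succ n ih =>
    rcases h with h | ⟨w, e', r⟩
    · subst h; exact Or.inr ⟨z, e, reach_refl _ z⟩
    · exact Or.inr ⟨w, e', ih r⟩

lemma ustep_symm {G : S → V → V → Prop} {x y : V} (h : ustep G x y) : ustep G y x := by
  obtain ⟨a, h⟩ := h; exact ⟨a, h.symm⟩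

lemma reach_ustep_symm {G : S → V → V → Prop} {n : ℕ} {x y : V}
    (h : reach (ustep G) n x y) : reach (ustep G) n y x := by
  induction n generalizing x y with
  | zero => exact (show x = y from h).symm
  | succ n ih =>
    rcases h with h | ⟨w, e, r⟩
    · exact Or.inl h.symm
    · exact reach_snoc (ih r) (ustep_symm e)

lemma sphere_sep {G : S → V → V → Prop} {n : ℕ} {c1 c2 : V}
    (h : ¬ reach (ustep G) (2*n+1) c2 c1) :
    (∀ x, reach (ustep G) n c1 x → reach (ustep G) n c2 x → False) ∧
    (∀ x y, reach (ustep G) n c1 x → reach (ustep G) n c2 y → ustep G x y → False) := by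
  constructor
  · intro x h1 h2
    exact h (reach_mono (by omega) (reach_trans h2 (reach_ustep_symm h1)))
  · intro x y h1 h2 e
    have h3 : reach (ustep G) (n+1) c2 x := reach_snoc h2 (ustep_symm e)
    exact h (reach_mono (by omega) (reach_trans h3 (reach_ustep_symm h1)))

end helpers

/-- Let `G1`, `G2` be labelled graphs over the same finite set of actions,
`ū ∈ V1^k`, `v̄ ∈ V2^k`, `u ∈ V1`, `v ∈ V2` with `u ∉ S_{2n+1}(G1, ū)` and
`v ∉ S_{2n+1}(G2, v̄)`. If `f : S_n(G1, ū) → S_n(G2, v̄)` and `f' : S_n(G1, u) → S_n(G2, v)`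
are isomorphisms, then `f ⊎ f' : S_n(G1, u, ū) → S_n(G2, v, v̄)` is an isomorphism. -/
theorem stmt0 {S V1 V2 : Type*} [Fintype S]
    (G1 : S → V1 → V1 → Prop) (G2 : S → V2 → V2 → Prop)
    (n k : ℕ) (us : Fin k → V1) (vs : Fin k → V2) (u : V1) (v : V2)
    (hu : u ∉ ⋃ i, sphere G1 (2 * n + 1) (us i))
    (hv : v ∉ ⋃ i, sphere G2 (2 * n + 1) (vs i))
    (f f' : V1 → V2)
    (hf : SphIso G1 G2 (⋃ i, sphere G1 n (us i)) (⋃ i, sphere G2 n (vs i)) f)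
    (hfconst : ∀ i, f (us i) = vs i)
    (hf' : SphIso G1 G2 (sphere G1 n u) (sphere G2 n v) f')
    (hf'const : f' u = v) :
    ∃ g : V1 → V2,
      (∀ x ∈ sphere G1 n u, g x = f' x) ∧
      (∀ x ∈ ⋃ i, sphere G1 n (us i), g x = f x) ∧
      SphIso G1 G2 (sphere G1 n u ∪ ⋃ i, sphere G1 n (us i))
        (sphere G2 n v ∪ ⋃ i, sphere G2 n (vs i)) g ∧
      g u = v ∧ ∀ i, g (us i) = vs i := by
  classical
  simp only [Set.mem_iUnion, not_exists] at hu hv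
  -- separation facts
  have hsep1 : ∀ i : Fin k,
      (∀ x, reach (ustep G1) n u x → reach (ustep G1) n (us i) x → False) ∧
      (∀ x y, reach (ustep G1) n u x → reach (ustep G1) n (us i) y → ustep G1 x y → False) :=
    fun i => sphere_sep (hu i)
  have hsep2 : ∀ i : Fin k,
      (∀ x, reach (ustep G2) n v x → reach (ustep G2) n (vs i) x → False) ∧
      (∀ x y, reach (ustep G2) n v x → reach (ustep G2) n (vs i) y → ustep G2 x y → False) :=
    fun i => sphere_sep (hv i)
  set g : V1 → V2 := fun x => if x ∈ sphere G1 n u then f' x else f x with hg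
  have hgleft : ∀ x ∈ sphere G1 n u, g x = f' x := fun x hx => if_pos hx
  have hdisj : ∀ x ∈ ⋃ i, sphere G1 n (us i), x ∉ sphere G1 n u := by
    intro x hx hxu
    obtain ⟨i, hxi⟩ := Set.mem_iUnion.mp hx
    exact (hsep1 i).1 x hxu hxi
  have hgright : ∀ x ∈ ⋃ i, sphere G1 n (us i), g x = f x := by
    intro x hx; exact if_neg (hdisj x hx)
  -- images
  have hmapL : ∀ x ∈ sphere G1 n u, g x ∈ sphere G2 n v := by
    intro x hx; rw [hgleft x hx]; exact hf'.1.1 hx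
  have hmapR : ∀ x ∈ ⋃ i, sphere G1 n (us i), g x ∈ ⋃ i, sphere G2 n (vs i) := by
    intro x hx; rw [hgright x hx]; exact hf.1.1 hx
  have hdisj2 : ∀ y ∈ sphere G2 n v, y ∉ ⋃ i, sphere G2 n (vs i) := by
    intro y hy hy2
    obtain ⟨i, hyi⟩ := Set.mem_iUnion.mp hy2
    exact (hsep2 i).1 y hy hyi
  refine ⟨g, hgleft, hgright, ⟨⟨?_, ?_, ?_⟩, ?_⟩, ?_, ?_⟩
  · -- MapsTo
    rintro x (hx | hx)
    · exact Or.inl (hmapL x hx)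
    · exact Or.inr (hmapR x hx)
  · -- InjOn
    rintro x (hx | hx) y (hy | hy) hxy
    · rw [hgleft x hx, hgleft y hy] at hxy
      exact hf'.1.2.1 hx hy hxy
    · exact absurd (hxy ▸ hmapL x hx) (fun h => hdisj2 _ h (hmapR y hy))
    · exact absurd (hxy ▸ hmapR x hx) (fun h => hdisj2 _ (hmapL y hy) h)
    · rw [hgright x hx, hgright y hy] at hxy
      exact hf.1.2.1 hx hy hxy
  · -- SurjOn
    rintro y (hy | hy)
    · obtain ⟨x, hx, rfl⟩ := hf'.1.2.2 hy
      exact ⟨x, Or.inl hx, hgleft x hx⟩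
    · obtain ⟨x, hx, rfl⟩ := hf.1.2.2 hy
      exact ⟨x, Or.inr hx, hgright x hx⟩
  · -- edge condition
    rintro a x (hx | hx) y (hy | hy)
    · rw [hgleft x hx, hgleft y hy]
      exact hf'.2 a x hx y hy
    · constructor
      · intro h
        obtain ⟨i, hyi⟩ := Set.mem_iUnion.mp hy
        exact absurd ⟨a, Or.inl h⟩ (fun e => (hsep1 i).2 x y hx hyi e)
      · intro h
        obtain ⟨i, hyi⟩ := Set.mem_iUnion.mp (hmapR y hy)
        exact absurd ⟨a, Or.inl h⟩ (fun e => (hsep2 i).2 _ _ (hmapL x hx) hyi e)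
    · constructor
      · intro h
        obtain ⟨i, hxi⟩ := Set.mem_iUnion.mp hx
        exact absurd ⟨a, Or.inr h⟩ (fun e => (hsep1 i).2 y x hy hxi e)
      · intro h
        obtain ⟨i, hxi⟩ := Set.mem_iUnion.mp (hmapR x hx)
        exact absurd ⟨a, Or.inr h⟩ (fun e => (hsep2 i).2 _ _ (hmapL y hy) hxi e)
    · rw [hgright x hx, hgright y hy]
      exact hf.2 a x hx y hy
  · -- g u = v
    have : u ∈ sphere G1 n u := reach_refl n u
    rw [hgleft u this, hf'const]
  · -- g (us i) = vs i
    intro i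
    have husi : us i ∈ ⋃ j, sphere G1 n (us j) :=
      Set.mem_iUnion.mpr ⟨i, reach_refl n (us i)⟩
    rw [hgright _ husi, hfconst]
end

section
/- Let A be a ranked alphabet and let ranks = {m ∈ ℕ : m ≥ 1 and A_m ≠ ∅}. Then: (1) for every n ≥ 1, there is a ranked tree t ∈ Trees_A with exactly n leaves if and only if there exist numbers d_m ∈ ℕ (for m ∈ ranks) with n = 1 + Σ_{m ∈ ranks} d_m·(m−1); and (2) for every n ≥ 2, these conditions are furthermore equivalent to the existence of a chain t ∈ Trees_A with exactly n leaves. -/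
/-- Ranked trees over a set `A` of symbols (the rank of a symbol is given separately
by a function `rank : A → ℕ`; well-formedness is the predicate `RTree.WF`). -/
inductive RTree (A : Type) : Type
  | node : A → List (RTree A) → RTree A

namespace RTree

variable {A : Type}

/-- The subtree `t ↾ x` of `t` rooted at the address `x`; the children of a node with
child list `ts` are addressed by `0, …, ts.length - 1`, and addresses are words of
child indices. Returns `none` if `x` is not a node of `t`. -/
def subtreeAt : RTree A → List ℕ → Option (RTree A)
  | t, [] => some t
  | node _ ts, i :: x =>
    match ts[i]? with
    | some t' => subtreeAt t' x
    | none => none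

/-- The domain `D_t` of `t`: the set of addresses of nodes of `t`. -/
def dom (t : RTree A) : Set (List ℕ) := {x | subtreeAt t x ≠ none}

/-- `size t` is the number of nodes of `t`. -/
noncomputable def size (t : RTree A) : ℕ := (dom t).ncard

/-- The size of the subtree of `t` rooted at `x` (`0` if `x` is not a node of `t`). -/
noncomputable def sizeAt (t : RTree A) (x : List ℕ) : ℕ :=
  match subtreeAt t x with
  | some s => size s
  | none => 0

/-- The node at address `x` has some child, i.e. it is an internal node (for
well-formed trees this is equivalent to its label having rank at least one). -/
def hasChildAt (t : RTree A) (x : List ℕ) : Prop := ∃ i : ℕ, x ++ [i] ∈ dom t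

/-- The number of leaves of `t`. -/
noncomputable def leavesCount (t : RTree A) : ℕ := {x | x ∈ dom t ∧ ¬ hasChildAt t x}.ncard

/-- The number of internal nodes of `t`. -/
noncomputable def internalCount (t : RTree A) : ℕ := {x | x ∈ dom t ∧ hasChildAt t x}.ncard

/-- `t` is a chain: its domain is not just the root, and every (internal) node has at
most one internal child. -/
def isChain (t : RTree A) : Prop :=
  dom t ≠ {[]} ∧
    ∀ x ∈ dom t, {i : ℕ | x ++ [i] ∈ dom t ∧ hasChildAt t (x ++ [i])}.ncard ≤ 1

/-- Well-formedness of a ranked tree: every node labelled by a symbol of rank `i`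
has exactly `i` children. -/
inductive WF (rank : A → ℕ) : RTree A → Prop
  | node (a : A) (ts : List (RTree A)) : ts.length = rank a →
      (∀ t ∈ ts, WF rank t) → WF rank (node a ts)

end RTree

namespace RTree

variable {A : Type}

lemma nil_mem_dom (t : RTree A) : [] ∈ dom t := by
  simp [dom, subtreeAt]

lemma cons_mem_dom_iff (a : A) (ts : List (RTree A)) (i : ℕ) (x : List ℕ) :
    (i :: x) ∈ dom (node a ts) ↔ ∃ t', ts[i]? = some t' ∧ x ∈ dom t' := by
  simp only [dom, Set.mem_setOf_eq, subtreeAt]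
  cases h : ts[i]? with
  | none => simp
  | some t' => simp

lemma hasChildAt_node_nil_iff (a : A) (ts : List (RTree A)) :
    hasChildAt (node a ts) [] ↔ ts ≠ [] := by
  constructor
  · rintro ⟨i, hi⟩
    rw [List.nil_append, cons_mem_dom_iff] at hi
    obtain ⟨t', ht', -⟩ := hi
    intro h; subst h; simp at ht'
  · intro h
    refine ⟨0, ?_⟩
    rw [List.nil_append, cons_mem_dom_iff]
    cases ts with
    | nil => exact absurd rfl h
    | cons t ts' => exact ⟨t, by simp, nil_mem_dom t⟩

lemma hasChildAt_node_cons_iff (a : A) (ts : List (RTree A)) (i : ℕ) (x : List ℕ) :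
    hasChildAt (node a ts) (i :: x) ↔ ∃ t', ts[i]? = some t' ∧ hasChildAt t' x := by
  unfold hasChildAt
  constructor
  · rintro ⟨j, hj⟩
    rw [List.cons_append, cons_mem_dom_iff] at hj
    obtain ⟨t', h1, h2⟩ := hj
    exact ⟨t', h1, j, h2⟩
  · rintro ⟨t', h1, j, h2⟩
    exact ⟨j, by rw [List.cons_append, cons_mem_dom_iff]; exact ⟨t', h1, h2⟩⟩

lemma dom_node_eq (a : A) (ts : List (RTree A)) :
    dom (node a ts) =
      insert [] (⋃ i ∈ Finset.range ts.length, (i :: ·) '' dom (ts.getD i (node a []))) := by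
  ext x
  cases x with
  | nil => simp [nil_mem_dom]
  | cons i y =>
    simp only [cons_mem_dom_iff, Set.mem_insert_iff, Set.mem_iUnion, Finset.mem_range,
      Set.mem_image]
    constructor
    · rintro ⟨t', h1, h2⟩
      have hi : i < ts.length := by
        by_contra h; rw [List.getElem?_eq_none (Nat.le_of_not_lt h)] at h1; simp at h1
      right
      refine ⟨i, hi, y, ?_, rfl⟩
      rw [List.getElem?_eq_getElem hi] at h1
      rw [List.getD_eq_getElem ts _ hi]
      cases h1; exact h2
    · rintro (h | ⟨j, hj, z, hz, hey⟩)
      · simp at h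
      · injection hey with e1 e2
        subst e1; subst e2
        refine ⟨ts[j], List.getElem?_eq_getElem hj, ?_⟩
        rwa [List.getD_eq_getElem ts _ hj] at hz

lemma dom_finite {rank : A → ℕ} {t : RTree A} (h : WF rank t) : (dom t).Finite := by
  induction h with
  | node a ts hlen hwf ih =>
    rw [dom_node_eq]
    apply Set.Finite.insert
    apply Set.Finite.biUnion (Finset.range ts.length).finite_toSet
    intro i hi
    simp only [Finset.coe_sort_coe, Finset.mem_coe, Finset.mem_range] at hi
    exact Set.Finite.image _ (ih _ (by rw [List.getD_eq_getElem ts _ hi]; exact List.getElem_mem hi))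

def leavesSet (t : RTree A) : Set (List ℕ) := {x | x ∈ dom t ∧ ¬ hasChildAt t x}

lemma leavesCount_eq (t : RTree A) : leavesCount t = (leavesSet t).ncard := rfl

lemma leavesSet_subset_dom (t : RTree A) : leavesSet t ⊆ dom t := fun _ h => h.1

lemma dom_leaf (a : A) : dom (node a ([] : List (RTree A))) = {[]} := by
  ext x
  cases x with
  | nil => simp [nil_mem_dom]
  | cons i y => simp [cons_mem_dom_iff]

lemma leavesCount_leaf (a : A) : leavesCount (node a ([] : List (RTree A))) = 1 := by
  rw [leavesCount_eq]
  have : leavesSet (node a ([] : List (RTree A))) = {[]} := by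
    ext x
    simp only [leavesSet, Set.mem_setOf_eq, dom_leaf, Set.mem_singleton_iff]
    constructor
    · rintro ⟨h, -⟩; exact h
    · rintro rfl
      refine ⟨rfl, ?_⟩
      rw [hasChildAt_node_nil_iff]; simp
  rw [this, Set.ncard_singleton]

lemma leavesSet_node (a : A) (ts : List (RTree A)) (hts : ts ≠ []) :
    leavesSet (node a ts) =
      ⋃ i ∈ Finset.range ts.length, (i :: ·) '' leavesSet (ts.getD i (node a [])) := by
  ext x
  simp only [leavesSet, Set.mem_setOf_eq, Set.mem_iUnion, Finset.mem_range, Set.mem_image]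
  cases x with
  | nil =>
    simp only [hasChildAt_node_nil_iff, not_not]
    constructor
    · rintro ⟨-, h⟩; exact absurd h hts
    · rintro ⟨i, -, y, -, h⟩; simp at h
  | cons i y =>
    rw [cons_mem_dom_iff, hasChildAt_node_cons_iff]
    constructor
    · rintro ⟨⟨t', h1, h2⟩, h3⟩
      have hi : i < ts.length := by
        by_contra h; rw [List.getElem?_eq_none (Nat.le_of_not_lt h)] at h1; simp at h1
      rw [List.getElem?_eq_getElem hi] at h1
      cases h1
      refine ⟨i, hi, y, ⟨by rwa [List.getD_eq_getElem ts _ hi], ?_⟩, rfl⟩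
      rw [List.getD_eq_getElem ts _ hi]
      intro hc
      exact h3 ⟨ts[i], List.getElem?_eq_getElem hi, hc⟩
    · rintro ⟨j, hj, z, ⟨hz1, hz2⟩, hey⟩
      injection hey with e1 e2
      subst e1; subst e2
      rw [List.getD_eq_getElem ts _ hj] at hz1 hz2
      refine ⟨⟨ts[j], List.getElem?_eq_getElem hj, hz1⟩, ?_⟩
      rintro ⟨t', h1, h2⟩
      rw [List.getElem?_eq_getElem hj] at h1
      cases h1
      exact hz2 h2

lemma ncard_biUnion {α β : Type*} (s : Finset β) (f : β → Set α)
    (hfin : ∀ i ∈ s, (f i).Finite)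
    (hdisj : ∀ i ∈ s, ∀ j ∈ s, i ≠ j → Disjoint (f i) (f j)) :
    (⋃ i ∈ s, f i).ncard = ∑ i ∈ s, (f i).ncard := by
  classical
  induction s using Finset.induction with
  | empty => simp
  | insert _ _ hb ih =>
    rename_i b s
    rw [Finset.sum_insert hb]
    have : (⋃ i ∈ insert b s, f i) = f b ∪ ⋃ i ∈ s, f i := by
      simp [Set.biUnion_insert]
    rw [this, Set.ncard_union_eq ?_ (hfin b (Finset.mem_insert_self b s)) ?_,
      ih (fun i hi => hfin i (Finset.mem_insert_of_mem hi))
        (fun i hi j hj hij => hdisj i (Finset.mem_insert_of_mem hi) j (Finset.mem_insert_of_mem hj) hij)]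
    · rw [Set.disjoint_iff_forall_ne]
      rintro x hx y hy rfl
      simp only [Set.mem_iUnion, Finset.mem_coe] at hy
      obtain ⟨i, hi, hyi⟩ := hy
      exact Set.disjoint_iff_forall_ne.mp
        (hdisj b (Finset.mem_insert_self b s) i (Finset.mem_insert_of_mem hi)
          (fun h => hb (h ▸ hi))) hx hyi rfl
    · exact Set.Finite.biUnion s.finite_toSet (fun i hi => hfin i (Finset.mem_insert_of_mem hi))

lemma leavesCount_node (a : A) (ts : List (RTree A)) (hts : ts ≠ [])
    (hfin : ∀ t ∈ ts, (dom t).Finite) :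
    leavesCount (node a ts) = ∑ i ∈ Finset.range ts.length, leavesCount (ts.getD i (node a [])) := by
  rw [leavesCount_eq, leavesSet_node a ts hts, ncard_biUnion]
  · exact Finset.sum_congr rfl fun i _ => by
      rw [Set.ncard_image_of_injective _ (fun x y h => by simpa using h)]
      rfl
  · intro i hi
    simp only [Finset.mem_range] at hi
    apply Set.Finite.image
    exact Set.Finite.subset
      (hfin _ (by rw [List.getD_eq_getElem ts _ hi]; exact List.getElem_mem hi))
      (leavesSet_subset_dom _)
  · intro i _ j _ hij
    rw [Set.disjoint_iff_forall_ne]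
    rintro x ⟨u, -, rfl⟩ y ⟨v, -, rfl⟩ h
    exact hij (List.cons.injEq .. ▸ h).1

end RTree

namespace RTree

lemma forward_lemma {A : Type} {rank : A → ℕ} :
    ∀ t : RTree A, WF rank t → ∃ d : ℕ →₀ ℕ, (∀ m ∈ d.support, 1 ≤ m ∧ ∃ a, rank a = m) ∧
      leavesCount t = 1 + d.sum fun m k => k * (m - 1) := by
  intro t ht
  induction ht with
  | node a ts hlen hwf ih =>
    classical
    rcases eq_or_ne ts [] with rfl | hne
    · refine ⟨0, by simp, ?_⟩
      simp [leavesCount_leaf, Finsupp.sum_zero_index]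
    · choose D hD1 hD2 using ih
      set g : ℕ → (ℕ →₀ ℕ) := fun i =>
        if h : i < ts.length then D (ts.getD i (node a []))
          (by rw [List.getD_eq_getElem ts _ h]; exact List.getElem_mem h) else 0 with hg
      have hF : ∀ m : ℕ, (m : ℕ) * (0:ℕ) = 0 := by simp
      set F : ℕ → ℕ → ℕ := fun m k => k * (m - 1) with hFdef
      have hF0 : ∀ m, F m 0 = 0 := by simp [hFdef]
      have hFadd : ∀ m k₁ k₂, F m (k₁ + k₂) = F m k₁ + F m k₂ := by
        intro m k1 k2; simp [hFdef, add_mul]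
      refine ⟨(∑ i ∈ Finset.range ts.length, g i) + Finsupp.single ts.length 1, ?_, ?_⟩
      · intro m hm
        have := Finsupp.support_add hm
        rw [Finset.mem_union] at this
        rcases this with h | h
        · obtain ⟨i, hi, hmi⟩ := Finsupp.mem_support_finset_sum m h
          rw [Finset.mem_range] at hi
          rw [hg] at hmi
          simp only [hi, dif_pos] at hmi
          exact hD1 _ _ m hmi
        · rw [Finsupp.support_single_ne_zero _ (by norm_num), Finset.mem_singleton] at h
          subst h
          have hlen1 : 1 ≤ ts.length := by
            cases ts with
            | nil => exact absurd rfl hne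
            | cons _ _ => simp
          exact ⟨hlen1, a, hlen.symm⟩
      · rw [leavesCount_node a ts hne (fun t htm => dom_finite (hwf t htm))]
        rw [Finsupp.sum_add_index' hF0 hFadd, Finsupp.sum_single_index (hF0 _),
          ← Finsupp.sum_finset_sum_index hF0 hFadd]
        have : ∀ i ∈ Finset.range ts.length,
            leavesCount (ts.getD i (node a [])) = 1 + (g i).sum F := by
          intro i hi
          rw [Finset.mem_range] at hi
          rw [hg]
          simp only [hi, dif_pos]
          exact hD2 _ _
        rw [Finset.sum_congr rfl this, Finset.sum_add_distrib]
        simp only [Finset.sum_const, Finset.card_range, smul_eq_mul, mul_one]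
        have hlen1 : 1 ≤ ts.length := by
          cases ts with
          | nil => exact absurd rfl hne
          | cons _ _ => simp
        have e : F ts.length 1 = ts.length - 1 := by simp [hFdef]
        rw [e]
        omega

end RTree

namespace RTree

def chainish (t : RTree A) : Prop :=
  ∀ x ∈ dom t, {i : ℕ | x ++ [i] ∈ dom t ∧ hasChildAt t (x ++ [i])}.ncard ≤ 1

lemma chainish_leaf (a : A) : chainish (node a ([] : List (RTree A))) := by
  intro x hx
  rw [dom_leaf] at hx
  cases hx
  have : {i : ℕ | ([] : List ℕ) ++ [i] ∈ dom (node a ([] : List (RTree A))) ∧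
      hasChildAt (node a ([] : List (RTree A))) ([] ++ [i])} = ∅ := by
    ext i
    simp only [List.nil_append, Set.mem_setOf_eq, Set.mem_empty_iff_false, iff_false, not_and]
    intro h
    rw [dom_leaf] at h
    simp at h
  rw [this, Set.ncard_empty]
  exact Nat.zero_le 1

lemma childSet_cons (a : A) (ts : List (RTree A)) (i : ℕ) (y : List ℕ) (ti : RTree A)
    (h : ts[i]? = some ti) :
    {j : ℕ | (i :: y) ++ [j] ∈ dom (node a ts) ∧ hasChildAt (node a ts) ((i :: y) ++ [j])} =
      {j : ℕ | y ++ [j] ∈ dom ti ∧ hasChildAt ti (y ++ [j])} := by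
  ext j
  simp only [List.cons_append, Set.mem_setOf_eq, cons_mem_dom_iff, hasChildAt_node_cons_iff, h]
  constructor
  · rintro ⟨⟨t1, e1, h1⟩, t2, e2, h2⟩
    cases e1; cases e2; exact ⟨h1, h2⟩
  · rintro ⟨h1, h2⟩
    exact ⟨⟨ti, rfl, h1⟩, ti, rfl, h2⟩

lemma build_lemma {rank : A → ℕ} {a0 : A} (ha0 : rank a0 = 0) :
    ∀ l : List ℕ, (∀ m ∈ l, 1 ≤ m ∧ ∃ a, rank a = m) →
      ∃ t : RTree A, WF rank t ∧ leavesCount t = 1 + (l.map (· - 1)).sum ∧ chainish t ∧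
        (l ≠ [] → dom t ≠ {[]}) := by
  intro l
  induction l with
  | nil =>
    intro _
    refine ⟨node a0 [], ⟨a0, [], by simp [ha0], by simp⟩, by simp [leavesCount_leaf], chainish_leaf a0, by simp⟩
  | cons m l ih =>
    intro hmem
    obtain ⟨hm1, a, ha⟩ := hmem m List.mem_cons_self
    obtain ⟨t', hWF', hLC', hch', -⟩ := ih (fun m' hm' => hmem m' (List.mem_cons_of_mem m hm'))
    obtain ⟨m', rfl⟩ : ∃ m', m = m' + 1 := ⟨m - 1, by omega⟩
    set leaf : RTree A := node a0 [] with hleaf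
    set ts : List (RTree A) := t' :: List.replicate m' leaf with hts
    have hmem_ts : ∀ s ∈ ts, s = t' ∨ s = leaf := by
      intro s hs
      rw [hts, List.mem_cons] at hs
      rcases hs with h | h
      · exact Or.inl h
      · exact Or.inr (List.eq_of_mem_replicate h)
    have hWFleaf : WF rank leaf := ⟨a0, [], by simp [ha0], by simp⟩
    have hWFts : ∀ s ∈ ts, WF rank s := by
      intro s hs
      rcases hmem_ts s hs with rfl | rfl
      · exact hWF'
      · exact hWFleaf
    have hlen : ts.length = m' + 1 := by simp [hts]
    have hne : ts ≠ [] := by simp [hts]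
    refine ⟨node a ts, ⟨a, ts, by rw [hlen, ha], hWFts⟩, ?_, ?_, ?_⟩
    · rw [leavesCount_node a ts hne (fun s hs => dom_finite (hWFts s hs)), hlen,
        Finset.sum_range_succ']
      have h0 : ts.getD 0 (node a []) = t' := by simp [hts]
      have hsucc : ∀ i ∈ Finset.range m', leavesCount (ts.getD (i+1) (node a [])) = 1 := by
        intro i hi
        rw [Finset.mem_range] at hi
        have : ts.getD (i+1) (node a []) = leaf := by
          rw [List.getD_eq_getElem ts _ (by rw [hlen]; omega)]
          simp [hts, List.getElem_replicate]
        rw [this, hleaf, leavesCount_leaf]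
      rw [Finset.sum_congr rfl hsucc, h0, hLC']
      simp only [List.map_cons, List.sum_cons, Finset.sum_const, Finset.card_range, smul_eq_mul,
        mul_one]
      omega
    · intro x hx
      cases x with
      | nil =>
        have hsub : {i : ℕ | ([] : List ℕ) ++ [i] ∈ dom (node a ts) ∧
            hasChildAt (node a ts) ([] ++ [i])} ⊆ {0} := by
          intro i hi
          simp only [List.nil_append, Set.mem_setOf_eq] at hi
          obtain ⟨h1, h2⟩ := hi
          rw [hasChildAt_node_cons_iff] at h2
          obtain ⟨ti, e, hc⟩ := h2
          by_contra hi0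
          have hi1 : i ≠ 0 := fun h => hi0 (by simp [h])
          have hti : ti = leaf := by
            rcases i with _ | i'
            · exact absurd rfl hi1
            · rw [hts, List.getElem?_cons_succ] at e
              have hmem' : ti ∈ List.replicate m' leaf := by
                have hlt : i' < (List.replicate m' leaf).length := by
                  by_contra hh
                  rw [List.getElem?_eq_none (Nat.le_of_not_lt hh)] at e; simp at e
                rw [List.getElem?_eq_getElem hlt] at e
                cases e; exact List.getElem_mem hlt
              exact List.eq_of_mem_replicate hmem'
          rw [hti, hleaf, hasChildAt_node_nil_iff] at hc
          exact hc rfl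
        calc {i : ℕ | ([] : List ℕ) ++ [i] ∈ dom (node a ts) ∧
            hasChildAt (node a ts) ([] ++ [i])}.ncard
            ≤ ({0} : Set ℕ).ncard := Set.ncard_le_ncard hsub (Set.finite_singleton 0)
          _ = 1 := Set.ncard_singleton 0
      | cons i y =>
        rw [cons_mem_dom_iff] at hx
        obtain ⟨ti, e, hy⟩ := hx
        rw [childSet_cons a ts i y ti e]
        have him : ti ∈ ts := by
          have hlt : i < ts.length := by
            by_contra hh
            rw [List.getElem?_eq_none (Nat.le_of_not_lt hh)] at e; simp at e
          rw [List.getElem?_eq_getElem hlt] at e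
          cases e; exact List.getElem_mem hlt
        rcases hmem_ts ti him with rfl | rfl
        · exact hch' y hy
        · exact chainish_leaf a0 y hy
    · intro _ hdom
      have : [0] ∈ dom (node a ts) := by
        rw [cons_mem_dom_iff]
        exact ⟨t', by simp [hts], nil_mem_dom t'⟩
      rw [hdom] at this
      simp at this

lemma exists_list_of_finsupp (P : ℕ → Prop) :
    ∀ d : ℕ →₀ ℕ, (∀ m ∈ d.support, P m) →
      ∃ l : List ℕ, (∀ m ∈ l, P m) ∧
        (l.map (· - 1)).sum = d.sum fun m k => k * (m - 1) := by
  intro d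
  induction d using Finsupp.induction with
  | zero => exact fun _ => ⟨[], by simp, by simp⟩
  | single_add a b f ha hb ih =>
    intro hP
    have hsupp : (Finsupp.single a b + f).support = insert a f.support := by
      rw [Finsupp.support_add_eq, Finsupp.support_single_ne_zero _ hb]
      · rw [Finset.insert_eq]
      · rw [Finsupp.support_single_ne_zero _ hb]
        simp [Finset.disjoint_singleton_left, ha]
    obtain ⟨l, hl1, hl2⟩ := ih (fun m hm => hP m (by rw [hsupp]; exact Finset.mem_insert_of_mem hm))
    refine ⟨List.replicate b a ++ l, ?_, ?_⟩
    · intro m hm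
      rw [List.mem_append] at hm
      rcases hm with hm | hm
      · rw [List.eq_of_mem_replicate hm]
        exact hP a (by rw [hsupp]; exact Finset.mem_insert_self a _)
      · exact hl1 m hm
    · rw [List.map_append, List.sum_append, hl2, List.map_replicate, List.sum_replicate,
        Finsupp.sum_add_index' (by simp) (fun m k1 k2 => by simp [add_mul]),
        Finsupp.sum_single_index (by simp)]
      simp [smul_eq_mul]

end RTree

/-- Let `A` be a ranked alphabet (with a rank-0 symbol) and
`ranks = {m ≥ 1 : A_m ≠ ∅}`. (1) For every `n ≥ 1`, there is a ranked tree over `A`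
with exactly `n` leaves iff there are numbers `d_m ∈ ℕ` (for `m ∈ ranks`) with
`n = 1 + Σ_{m ∈ ranks} d_m (m-1)`. (2) For every `n ≥ 2`, these conditions are
moreover equivalent to the existence of a chain over `A` with exactly `n` leaves. -/
theorem stmt3 (A : Type) [Fintype A] (rank : A → ℕ) (h0 : ∃ a, rank a = 0) :
    (∀ n : ℕ, 1 ≤ n →
      ((∃ t : RTree A, RTree.WF rank t ∧ RTree.leavesCount t = n) ↔
        ∃ d : ℕ →₀ ℕ, (∀ m ∈ d.support, 1 ≤ m ∧ ∃ a, rank a = m) ∧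
          n = 1 + d.sum fun m k => k * (m - 1)))
    ∧ (∀ n : ℕ, 2 ≤ n →
      (((∃ t : RTree A, RTree.WF rank t ∧ RTree.leavesCount t = n) ↔
        ∃ t : RTree A, RTree.WF rank t ∧ RTree.isChain t ∧ RTree.leavesCount t = n)
       ∧ ((∃ d : ℕ →₀ ℕ, (∀ m ∈ d.support, 1 ≤ m ∧ ∃ a, rank a = m) ∧
             n = 1 + d.sum fun m k => k * (m - 1)) ↔
          ∃ t : RTree A, RTree.WF rank t ∧ RTree.isChain t ∧ RTree.leavesCount t = n))) := by
  obtain ⟨a0, ha0⟩ := h0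
  -- tree → d
  have treeToD : ∀ n : ℕ, (∃ t : RTree A, RTree.WF rank t ∧ RTree.leavesCount t = n) →
      ∃ d : ℕ →₀ ℕ, (∀ m ∈ d.support, 1 ≤ m ∧ ∃ a, rank a = m) ∧
        n = 1 + d.sum fun m k => k * (m - 1) := by
    rintro n ⟨t, hWF, hLC⟩
    obtain ⟨d, hd1, hd2⟩ := RTree.forward_lemma t hWF
    exact ⟨d, hd1, by rw [← hLC, hd2]⟩
  -- d → tree (with chain info)
  have dToTree : ∀ n : ℕ,
      (∃ d : ℕ →₀ ℕ, (∀ m ∈ d.support, 1 ≤ m ∧ ∃ a, rank a = m) ∧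
        n = 1 + d.sum fun m k => k * (m - 1)) →
      ∃ t : RTree A, RTree.WF rank t ∧ RTree.leavesCount t = n ∧
        (2 ≤ n → RTree.isChain t) := by
    rintro n ⟨d, hd1, hd2⟩
    obtain ⟨l, hl1, hl2⟩ := RTree.exists_list_of_finsupp (fun m => 1 ≤ m ∧ ∃ a, rank a = m) d hd1
    obtain ⟨t, hWF, hLC, hch, hdom⟩ := RTree.build_lemma ha0 l hl1
    refine ⟨t, hWF, by rw [hLC, hl2, ← hd2], ?_⟩
    intro hn
    have hlne : l ≠ [] := by
      intro h
      subst h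
      simp at hl2
      omega
    exact ⟨hdom hlne, hch⟩
  constructor
  · intro n _
    exact ⟨treeToD n, fun h => by
      obtain ⟨t, hWF, hLC, -⟩ := dToTree n h
      exact ⟨t, hWF, hLC⟩⟩
  · intro n hn
    have h1 : (∃ t : RTree A, RTree.WF rank t ∧ RTree.leavesCount t = n) →
        ∃ t : RTree A, RTree.WF rank t ∧ RTree.isChain t ∧ RTree.leavesCount t = n := by
      intro h
      obtain ⟨t, hWF, hLC, hchain⟩ := dToTree n (treeToD n h)
      exact ⟨t, hWF, hchain hn, hLC⟩
    constructor
    · exact ⟨h1, fun ⟨t, hWF, _, hLC⟩ => ⟨t, hWF, hLC⟩⟩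
    · constructor
      · intro h
        obtain ⟨t, hWF, hLC, hchain⟩ := dToTree n h
        exact ⟨t, hWF, hchain hn, hLC⟩
      · rintro ⟨t, hWF, -, hLC⟩
        exact treeToD n ⟨t, hWF, hLC⟩
end

section
/- Let V be a finite nonempty alphabet with |V| = n and let Γ be a finite alphabet. Let α ∈ ℕ, let u,v ∈ Γ^* and u' ∈ V^* with |u| = |u'|, suppose u ≡_{α·n} v, and suppose |v| ≥ α·n·|Γ|. Then there exists v' ∈ V^* with |v'| = |v| and u ⊗ u' ≡_α v ⊗ v'. -/
/-- `ecount d u v` is the relation `u ≡_d v`: for every letter `a`, either `u` and `v`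
contain the same number of occurrences of `a`, or both contain at least `d` occurrences. -/
def ecount {α : Type*} [DecidableEq α] (d : ℕ) (u v : List α) : Prop :=
  ∀ a : α, u.count a = v.count a ∨ (d ≤ u.count a ∧ d ≤ v.count a)

lemma count_congr {β : Type} [BEq β] [LawfulBEq β] [DecidableEq β] (x : β) (l : List β) :
    l.count x = @List.count β instBEqOfDecidableEq x l := by
  induction l with
  | nil => rfl
  | cons y l ih => simp [List.count_cons, ih, beq_iff_eq]

section Aux

variable {V Γ : Type} [DecidableEq V] [DecidableEq Γ] [Inhabited V]

/-- Assign to each position of the word its pair letter, consuming the lists `f a`. -/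
def assignW (f : Γ → List V) : List Γ → List V
  | [] => []
  | a :: v => (f a).headI :: assignW (Function.update f a (f a).tail) v

lemma assignW_spec : ∀ (v : List Γ) (f : Γ → List V),
    (∀ a, (f a).length = v.count a) →
    (assignW f v).length = v.length ∧
      ∀ p : Γ × V, (v.zip (assignW f v)).count p = (f p.1).count p.2 := by
  intro v
  induction v with
  | nil =>
    intro f hf
    refine ⟨by simp [assignW], fun p => ?_⟩
    have h0 : f p.1 = [] := List.length_eq_zero_iff.mp (by simpa using hf p.1)
    simp [assignW, h0]
  | cons a v ih =>
    intro f hf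
    cases hfa : f a with
    | nil =>
      exfalso
      have := hf a
      rw [hfa, List.count_cons_self] at this
      simp at this
    | cons x t =>
      have hf' : ∀ c, (Function.update f a t c).length = v.count c := by
        intro c
        by_cases hc : c = a
        · subst hc
          have := hf c
          rw [hfa, List.count_cons_self] at this
          simp only [List.length_cons] at this
          simp only [Function.update_self]
          omega
        · rw [Function.update_of_ne hc]
          have := hf c
          rw [List.count_cons, if_neg (by simpa using Ne.symm hc)] at this
          simpa using this
      obtain ⟨ihl, ihc⟩ := ih (Function.update f a t) hf'
      have hop : assignW f (a :: v) = x :: assignW (Function.update f a t) v := by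
        show (f a).headI :: assignW (Function.update f a (f a).tail) v = _
        rw [hfa]; rfl
      constructor
      · rw [hop]; simp [ihl]
      · intro p
        obtain ⟨b, y⟩ := p
        rw [hop]
        show ((a, x) :: v.zip (assignW (Function.update f a t) v)).count (b, y) = _
        rw [List.count_cons, ihc (b, y)]
        by_cases hb : b = a
        · subst hb
          simp only [Function.update_self, hfa]
          rw [List.count_cons]
          congr 1
          simp only [beq_iff_eq, Prod.mk.injEq, true_and]
        · rw [Function.update_of_ne hb,
            if_neg (by simp only [beq_iff_eq, Prod.mk.injEq]; exact fun h => hb h.1.symm)]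
          simp

lemma sum_count_pairs [Fintype V] (l : List (Γ × V)) (a : Γ) :
    ∑ b : V, l.count (a, b) = l.countP (fun p => p.1 == a) := by
  induction l with
  | nil => simp
  | cons q l ihq =>
    obtain ⟨x, y⟩ := q
    rw [List.countP_cons]
    simp only [List.count_cons]
    rw [Finset.sum_add_distrib, ihq]
    congr 1
    by_cases hx : x = a
    · subst hx
      have h2 : ∀ b : V, (if ((x, y) == (x, b) : Bool) then (1 : ℕ) else 0)
          = if b = y then 1 else 0 := by
        intro b
        simp only [beq_iff_eq, Prod.mk.injEq, true_and]
        by_cases hby : b = y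
        · simp [hby]
        · rw [if_neg (fun h => hby h.symm), if_neg hby]
      simp only [h2]
      simp
    · have h2 : ∀ b : V, (if ((x, y) == (a, b) : Bool) then (1 : ℕ) else 0) = 0 := by
        intro b
        rw [if_neg]
        simp only [beq_iff_eq, Prod.mk.injEq]
        exact fun h => hx h.1
      simp only [h2]
      simp [hx]

end Aux

/-- Let `V` be a finite nonempty alphabet with `|V| = n` and `Γ` a
finite alphabet. Let `α ∈ ℕ`, `u, v ∈ Γ*`, `u' ∈ V*` with `|u| = |u'|`, `u ≡_{α·n} v`,
and `|v| ≥ α·n·|Γ|`. Then there is `v' ∈ V*` with `|v'| = |v|` and `u ⊗ u' ≡_α v ⊗ v'`. -/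
theorem stmt12 (V Γ : Type) [Fintype V] [Nonempty V] [DecidableEq V]
    [Fintype Γ] [DecidableEq Γ] (n : ℕ) (hn : Fintype.card V = n)
    (α : ℕ) (u v : List Γ) (u' : List V) (hlen : u.length = u'.length)
    (hequiv : ecount (α * n) u v) (hv : α * n * Fintype.card Γ ≤ v.length) :
    ∃ v' : List V, v'.length = v.length ∧ ecount α (u.zip u') (v.zip v') := by
  have : Inhabited V := Classical.inhabited_of_nonempty ‹_›
  have hn1 : 1 ≤ n := hn ▸ Fintype.card_pos
  set c : Γ → V → ℕ := fun a b => (u.zip u').count (a, b) with hc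
  have hsum : ∀ a, ∑ b, c a b = u.count a := by
    intro a
    rw [hc]
    rw [sum_count_pairs (u.zip u') a]
    have hmap : List.map Prod.fst (u.zip u') = u := List.map_fst_zip (le_of_eq hlen)
    conv_rhs => rw [← hmap]
    rw [List.count_eq_countP, List.countP_map]
    rfl
  have hg : ∀ a : Γ, ∃ g : V → ℕ, (∑ b, g b = v.count a) ∧
      ∀ b, g b = c a b ∨ (α ≤ g b ∧ α ≤ c a b) := by
    intro a
    rcases hequiv a with heq | ⟨hua, hva⟩
    · exact ⟨c a, by rw [hsum a, heq], fun b => Or.inl rfl⟩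
    · obtain ⟨b0, -, hb0⟩ := Finset.exists_max_image Finset.univ (c a)
        ⟨default, Finset.mem_univ _⟩
      have hcb0 : α ≤ c a b0 := by
        have h1 : ∑ b, c a b ≤ Finset.univ.card • c a b0 :=
          Finset.sum_le_card_nsmul _ _ _ (fun b hb => hb0 b hb)
        rw [hsum a, Finset.card_univ, hn, smul_eq_mul] at h1
        have h2 : n * α ≤ n * c a b0 := by
          rw [Nat.mul_comm n α]; exact le_trans hua h1
        exact Nat.le_of_mul_le_mul_left h2 (by omega)
      set S := ∑ b ∈ Finset.univ.erase b0, min (c a b) α with hS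
      have hScard : S ≤ (n - 1) * α := by
        have h1 : S ≤ (Finset.univ.erase b0).card • α :=
          Finset.sum_le_card_nsmul _ _ _ (fun b _ => min_le_right _ _)
        rwa [Finset.card_erase_of_mem (Finset.mem_univ b0), Finset.card_univ, hn,
          smul_eq_mul] at h1
      have hSle : S + α ≤ v.count a := by
        have h3 : (n - 1) * α + α = n * α := by
          cases n with
          | zero => omega
          | succ m => simp [Nat.succ_sub_one, Nat.succ_mul]
        have h2 : S + α ≤ n * α := by omega
        calc S + α ≤ n * α := h2
          _ = α * n := Nat.mul_comm _ _
          _ ≤ v.count a := hva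
      refine ⟨fun b => if b = b0 then v.count a - S else min (c a b) α, ?_, ?_⟩
      · rw [← Finset.add_sum_erase _ _ (Finset.mem_univ b0)]
        have he : ∑ b ∈ Finset.univ.erase b0,
            (if b = b0 then v.count a - S else min (c a b) α) = S := by
          rw [hS]
          refine Finset.sum_congr rfl fun b hb => ?_
          rw [if_neg (Finset.ne_of_mem_erase hb)]
        have hb0eq : (if b0 = b0 then v.count a - S else min (c a b0) α)
            = v.count a - S := if_pos rfl
        rw [he, hb0eq]
        omega
      · intro b
        by_cases hb : b = b0
        · right
          have hb0eq : (if b = b0 then v.count a - S else min (c a b) α)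
              = v.count a - S := if_pos hb
          simp only [hb0eq]
          exact ⟨by omega, hb ▸ hcb0⟩
        · have hbeq : (if b = b0 then v.count a - S else min (c a b) α)
              = min (c a b) α := if_neg hb
          simp only [hbeq]
          rcases le_or_gt α (c a b) with h | h
          · right; exact ⟨le_min h le_rfl, h⟩
          · left; exact min_eq_left h.le
  choose g hg1 hg2 using hg
  set f : Γ → List V := fun a => Finset.univ.toList.flatMap fun b => List.replicate (g a b) b
    with hfdef
  have hfcount : ∀ a b, (f a).count b = g a b := by
    intro a b
    show (Finset.univ.toList.flatMap fun b' => List.replicate (g a b') b').count b = g a b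
    rw [List.count_flatMap]
    have h2 : ∀ b' : V, (List.count b ∘ fun b' => List.replicate (g a b') b') b'
        = if b' = b then g a b' else 0 := by
      intro b'
      simp only [Function.comp_apply, List.count_replicate]
      by_cases hbb : b' = b
      · simp [hbb]
      · rw [if_neg (by simpa using hbb), if_neg hbb]
    rw [funext h2, Finset.sum_map_toList]
    simp
  have hflen : ∀ a, (f a).length = v.count a := by
    intro a
    show (Finset.univ.toList.flatMap fun b' => List.replicate (g a b') b').length = v.count a
    rw [List.length_flatMap]
    have h2 : ∀ b' : V, (List.length ∘ fun b' => List.replicate (g a b') b') b' = g a b' := by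
      intro b'; simp
    simp only [List.length_replicate]
    rw [Finset.sum_map_toList]
    exact hg1 a
  obtain ⟨hl, hcnt⟩ := assignW_spec v f hflen
  refine ⟨assignW f v, hl, ?_⟩
  intro p
  obtain ⟨a, b⟩ := p
  have e1 : (u.zip u').count (a, b)
      = @List.count (Γ × V) instBEqOfDecidableEq (a, b) (u.zip u') := count_congr _ _
  have e2 : (v.zip (assignW f v)).count (a, b)
      = @List.count (Γ × V) instBEqOfDecidableEq (a, b) (v.zip (assignW f v)) := count_congr _ _
  rw [← e1, ← e2]
  have key : List.count (a, b) (v.zip (assignW f v)) = g a b :=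
    (hcnt (a, b)).trans (hfcount a b)
  rcases hg2 a b with h | ⟨h1, h2⟩
  · left; exact h.symm.trans key.symm
  · right; exact ⟨h2, le_of_le_of_eq h1 key.symm⟩
end

section
/- Let V be a finite alphabet with |V| = n ≥ 2 and let (u_1,…,u_k), (v_1,…,v_k) ∈ (V^*)^k with (u_1,…,u_k) ≡_{k,0} (v_1,…,v_k). Then for all 1 ≤ i,j ≤ k: (1) u_i = u_j if and only if v_i = v_j; and (2) for all letters a,b ∈ V: u_j is obtained from u_i by replacing a single occurrence of a by b (i.e., u_i = x a y and u_j = x b y for some x,y ∈ V^*) if and only if v_j is obtained from v_i by replacing a single occurrence of a by b. Consequently (u_1,…,u_k) and (v_1,…,v_k) satisfy the same quantifier-free first-order formulas in the labelled graph G^+, where G is the labelled graph on V with action set V × V and edges a →^{(a,b)} b. -/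
/-- The convolution of a family `ws` of words (each of length `L`): the word of
length `L` whose `p`-th letter is the tuple (here: list) of the `p`-th letters of
the words of `ws`. -/
def conv {V : Type*} (ws : List (List V)) (L : ℕ) : List (List (Option V)) :=
  (List.range L).map fun p => ws.map fun w => w[p]?

set_option linter.unusedSectionVars false

section Helpers
variable {V : Type} [DecidableEq V] {ι : Type} [DecidableEq ι]

def tup (W : ι → List V) (S : List ι) (p : ℕ) : List (Option V) :=
  S.map fun m => (W m)[p]?

lemma conv_map_eq (W : ι → List V) (S : List ι) (L : ℕ) :
    conv (S.map W) L = (List.range L).map (tup W S) := by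
  unfold conv tup
  simp [List.map_map, Function.comp]

lemma mem_conv {W : ι → List V} {S : List ι} {L : ℕ} {c : List (Option V)} :
    c ∈ conv (S.map W) L ↔ ∃ p < L, tup W S p = c := by
  simp [conv_map_eq]

lemma count_conv (W : ι → List V) (S : List ι) (L : ℕ) (c : List (Option V))
    {inst : BEq (List (Option V))} [@LawfulBEq _ inst] :
    @List.count _ inst c (conv (S.map W) L)
      = ((Finset.range L).filter (fun p => tup W S p = c)).card := by
  rw [conv_map_eq, List.count, List.countP_map]
  rw [List.countP_eq_length_filter]
  simp only [Finset.range, Finset.filter, Multiset.range, Multiset.filter_coe,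
    Multiset.coe_card, Multiset.quot_mk_to_coe]
  congr 1
  apply List.filter_congr
  intro p _
  simp only [Function.comp]
  rw [Bool.eq_iff_iff]
  simp [beq_iff_eq]

lemma tup_entry (W : ι → List V) (S : List ι) {i : ι} (hi : i ∈ S) (p : ℕ) :
    (tup W S p)[S.idxOf i]? = some ((W i)[p]?) := by
  unfold tup
  rw [List.getElem?_map]
  rw [List.getElem?_eq_getElem (List.idxOf_lt_length_iff.mpr hi), List.getElem_idxOf]
  rfl

lemma tup_eq_entry {W W' : ι → List V} {S : List ι} {p q : ℕ}
    (h : tup W S p = tup W' S q) {i : ι} (hi : i ∈ S) :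
    (W i)[p]? = (W' i)[q]? := by
  have h2 := congrArg (fun l => l[S.idxOf i]?) h
  simp only [tup_entry _ _ hi] at h2
  exact Option.some_injective _ h2

end Helpers

section Main
variable {V : Type} [DecidableEq V] {ι : Type} [DecidableEq ι]

lemma ecount_mem {α : Type*} [DecidableEq α] {d : ℕ} (hd : 1 ≤ d) {cu cv : List α}
    (hec : ecount d cu cv) {c : α} (hc : c ∈ cu) : c ∈ cv := by
  rcases hec c with h | h
  · rw [← List.count_pos_iff, ← h, List.count_pos_iff]; exact hc
  · rw [← List.count_pos_iff]; omega

lemma ecount_symm {α : Type*} [DecidableEq α] {d : ℕ} {cu cv : List α}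
    (hec : ecount d cu cv) : ecount d cv cu :=
  fun a => (hec a).imp Eq.symm And.symm

lemma main_eq (d : ℕ) (hd : 1 ≤ d) (S : List ι) (U W : ι → List V) (Lu Lw : ℕ)
    (hW : ∀ m ∈ S, (W m).length = Lw)
    (hec : ecount d (conv (S.map U) Lu) (conv (S.map W) Lw))
    {i j : ι} (hi : i ∈ S) (hj : j ∈ S) (h : U i = U j) : W i = W j := by
  apply List.ext_getElem?
  intro q
  by_cases hq : q < Lw
  · have hcv : tup W S q ∈ conv (S.map W) Lw := mem_conv.mpr ⟨q, hq, rfl⟩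
    have hcu : tup W S q ∈ conv (S.map U) Lu :=
      ecount_mem hd (ecount_symm hec) hcv
    obtain ⟨p, _, hpc⟩ := mem_conv.mp hcu
    have h1 := tup_eq_entry hpc hi
    have h2 := tup_eq_entry hpc hj
    rw [← h1, ← h2, h]
  · rw [List.getElem?_eq_none (by rw [hW i hi]; omega),
      List.getElem?_eq_none (by rw [hW j hj]; omega)]

lemma getElem?_append_cons_self {x y : List V} {a : V} :
    (x ++ a :: y)[x.length]? = some a := by
  rw [List.getElem?_append_right le_rfl, Nat.sub_self]
  simp

lemma getElem?_replace_ne {x y : List V} {a b : V} {p : ℕ} (h : p ≠ x.length) :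
    (x ++ a :: y)[p]? = (x ++ b :: y)[p]? := by
  rcases lt_or_gt_of_ne h with h | h
  · rw [List.getElem?_append_left h, List.getElem?_append_left h]
  · have hx : x.length ≤ p := le_of_lt h
    rw [List.getElem?_append_right hx, List.getElem?_append_right hx]
    obtain ⟨m, hm⟩ : ∃ m, p - x.length = m + 1 := ⟨p - x.length - 1, by omega⟩
    rw [hm]
    rfl

lemma list_split_at {l : List V} {q : ℕ} (hq : q < l.length) :
    l = l.take q ++ l[q] :: l.drop (q + 1) := by
  conv_lhs => rw [← List.take_append_drop q l, List.drop_eq_getElem_cons hq]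

lemma main_rep (d : ℕ) (hd : 2 ≤ d) (S : List ι) (U W : ι → List V) (Lu Lw : ℕ)
    (hU : ∀ m ∈ S, (U m).length = Lu) (hW : ∀ m ∈ S, (W m).length = Lw)
    (hec : ecount d (conv (S.map U) Lu) (conv (S.map W) Lw))
    {i j : ι} (hi : i ∈ S) (hj : j ∈ S)
    {a b : V} {x y : List V} (h1 : U i = x ++ a :: y) (h2 : U j = x ++ b :: y) :
    ∃ x' y' : List V, W i = x' ++ a :: y' ∧ W j = x' ++ b :: y' := by
  have hd1 : 1 ≤ d := by omega
  have hLu : (U i).length = Lu := hU i hi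
  have hp0 : x.length < Lu := by rw [← hLu, h1]; simp
  have hUi_p0 : (U i)[x.length]? = some a := by rw [h1]; exact getElem?_append_cons_self
  have hUj_p0 : (U j)[x.length]? = some b := by rw [h2]; exact getElem?_append_cons_self
  by_cases hab : a = b
  · -- a = b : then U i = U j, W i = W j, and a occurs in W i
    subst hab
    have huv : W i = W j := main_eq d hd1 S U W Lu Lw hW hec hi hj (h1.trans h2.symm)
    have hcu : tup U S x.length ∈ conv (S.map U) Lu := mem_conv.mpr ⟨x.length, hp0, rfl⟩
    have hcv := ecount_mem hd1 hec hcu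
    obtain ⟨q, hqL, hqc⟩ := mem_conv.mp hcv
    have hWi_q : (W i)[q]? = some a := by
      rw [← tup_eq_entry hqc.symm hi]; exact hUi_p0
    have hqlen : q < (W i).length := by
      rw [hW i hi]; exact hqL
    have hWi_q' : (W i)[q] = a := by
      rw [List.getElem?_eq_getElem hqlen] at hWi_q
      exact Option.some_injective _ hWi_q
    refine ⟨(W i).take q, (W i).drop (q + 1), ?_, ?_⟩
    · rw [← hWi_q']; exact list_split_at hqlen
    · rw [← huv, ← hWi_q']; exact list_split_at hqlen
  · -- a ≠ b
    have hoff : ∀ p, p ≠ x.length → (U i)[p]? = (U j)[p]? := by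
      intro p hp
      rw [h1, h2]
      exact getElem?_replace_ne hp
    -- the unique differing position in U
    have hA : (Finset.range Lu).filter (fun p => tup U S p = tup U S x.length)
        = {x.length} := by
      ext p
      simp only [Finset.mem_filter, Finset.mem_range, Finset.mem_singleton]
      constructor
      · rintro ⟨hpL, hpc⟩
        by_contra hpp
        have e1 : (U i)[p]? = (U i)[x.length]? := tup_eq_entry hpc hi
        have e2 : (U j)[p]? = (U j)[x.length]? := tup_eq_entry hpc hj
        rw [hoff p hpp] at e1
        have e3 : (U i)[x.length]? = (U j)[x.length]? := e1.symm.trans e2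
        rw [hUi_p0, hUj_p0] at e3
        exact hab (Option.some_injective _ e3)
      · rintro rfl
        exact ⟨hp0, rfl⟩
    have hAcard : ((Finset.range Lu).filter
        (fun p => tup U S p = tup U S x.length)).card = 1 := by
      rw [hA]; simp
    have hBcard : ((Finset.range Lw).filter
        (fun p => tup W S p = tup U S x.length)).card = 1 := by
      rcases hec (tup U S x.length) with h | h
      · rw [count_conv, count_conv] at h; rw [← h]; exact hAcard
      · rw [count_conv, count_conv] at h; rw [hAcard] at h; omega
    obtain ⟨q0, hB⟩ := Finset.card_eq_one.mp hBcard
    have hq0 : q0 < Lw ∧ tup W S q0 = tup U S x.length := by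
      have h3 : q0 ∈ (Finset.range Lw).filter (fun p => tup W S p = tup U S x.length) := by
        rw [hB]; exact Finset.mem_singleton_self q0
      have h4 := Finset.mem_filter.mp h3
      exact ⟨Finset.mem_range.mp h4.1, h4.2⟩
    have hWi_q0 : (W i)[q0]? = some a := by
      rw [tup_eq_entry hq0.2 hi]; exact hUi_p0
    have hWj_q0 : (W j)[q0]? = some b := by
      rw [tup_eq_entry hq0.2 hj]; exact hUj_p0
    have hoffW : ∀ q, q ≠ q0 → (W i)[q]? = (W j)[q]? := by
      intro q hq
      by_cases hqL : q < Lw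
      · by_contra hne
        have hcv : tup W S q ∈ conv (S.map W) Lw := mem_conv.mpr ⟨q, hqL, rfl⟩
        have hcu := ecount_mem hd1 (ecount_symm hec) hcv
        obtain ⟨p, hpL, hpc⟩ := mem_conv.mp hcu
        have hpp0 : p = x.length := by
          by_contra hpp
          have e1 : (U i)[p]? = (W i)[q]? := tup_eq_entry hpc hi
          have e2 : (U j)[p]? = (W j)[q]? := tup_eq_entry hpc hj
          rw [hoff p hpp] at e1
          exact hne (e1.symm.trans e2)
        have h5 : q ∈ (Finset.range Lw).filter (fun p' => tup W S p' = tup U S x.length) := by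
          rw [Finset.mem_filter]
          exact ⟨Finset.mem_range.mpr hqL, by rw [← hpc, hpp0]⟩
        rw [hB] at h5
        exact hq (Finset.mem_singleton.mp h5)
      · rw [List.getElem?_eq_none (by rw [hW i hi]; omega),
          List.getElem?_eq_none (by rw [hW j hj]; omega)]
    have hq0len : q0 < (W i).length := by rw [hW i hi]; exact hq0.1
    have hWi_q0' : (W i)[q0] = a := by
      rw [List.getElem?_eq_getElem hq0len] at hWi_q0
      exact Option.some_injective _ hWi_q0
    refine ⟨(W i).take q0, (W i).drop (q0 + 1), ?_, ?_⟩
    · rw [← hWi_q0']; exact list_split_at hq0len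
    · -- W j agrees with W i off q0, and has b at q0
      have hxlen : ((W i).take q0).length = q0 := by
        rw [List.length_take]; omega
      have hsplit : W i = (W i).take q0 ++ a :: (W i).drop (q0 + 1) := by
        rw [← hWi_q0']; exact list_split_at hq0len
      apply List.ext_getElem?
      intro q
      by_cases hqq : q = q0
      · rw [hqq, hWj_q0]
        have h6 := getElem?_append_cons_self (x := (W i).take q0)
          (y := (W i).drop (q0 + 1)) (a := b)
        rw [hxlen] at h6
        exact h6.symm
      · rw [← hoffW q hqq]
        conv_lhs => rw [hsplit]
        exact getElem?_replace_ne (by rw [hxlen]; exact hqq)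

end Main

section Thm
variable {V : Type} [Fintype V] [DecidableEq V]

theorem parts12 (n : ℕ) (h2 : 2 ≤ n) (k : ℕ)
    (u v : Fin k → List V)
    (ha : ∀ i j, ((u i).length = (u j).length ↔ (v i).length = (v j).length))
    (hc : ∀ i, ecount (n ^ (0 + 1))
      (conv (((List.finRange k).filter fun j => (u j).length == (u i).length).map u)
        (u i).length)
      (conv (((List.finRange k).filter fun j => (u j).length == (u i).length).map v)
        (v i).length)) :
    (∀ i j, u i = u j ↔ v i = v j) ∧
    (∀ i j, ∀ a b : V,
      ((∃ x y : List V, u i = x ++ a :: y ∧ u j = x ++ b :: y) ↔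
        (∃ x y : List V, v i = x ++ a :: y ∧ v j = x ++ b :: y))) := by
  have hd : 2 ≤ n ^ (0 + 1) := by simpa using h2
  have hmem : ∀ i m : Fin k,
      (m ∈ (List.finRange k).filter fun j => (u j).length == (u i).length) ↔
        (u m).length = (u i).length := by
    intro i m; simp
  have hulen : ∀ i : Fin k,
      ∀ m ∈ (List.finRange k).filter fun j => (u j).length == (u i).length,
        (u m).length = (u i).length := fun i m hm => (hmem i m).mp hm
  have hvlen : ∀ i : Fin k,
      ∀ m ∈ (List.finRange k).filter fun j => (u j).length == (u i).length,
        (v m).length = (v i).length := fun i m hm => (ha m i).mp ((hmem i m).mp hm)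
  constructor
  · intro i j
    by_cases hlen : (u i).length = (u j).length
    · constructor
      · intro hij
        exact main_eq _ (by omega) _ u v _ _ (hvlen i) (hc i)
          ((hmem i i).mpr rfl) ((hmem i j).mpr hlen.symm) hij
      · intro hij
        exact main_eq _ (by omega) _ v u _ _ (hulen i) (ecount_symm (hc i))
          ((hmem i i).mpr rfl) ((hmem i j).mpr hlen.symm) hij
    · constructor
      · intro hij; exact absurd (congrArg List.length hij) hlen
      · intro hij; exact absurd ((ha i j).mpr (congrArg List.length hij)) hlen
  · intro i j a b
    by_cases hlen : (u i).length = (u j).length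
    · constructor
      · rintro ⟨x, y, hx1, hx2⟩
        exact main_rep _ hd _ u v _ _ (hulen i) (hvlen i) (hc i)
          ((hmem i i).mpr rfl) ((hmem i j).mpr hlen.symm) hx1 hx2
      · rintro ⟨x, y, hx1, hx2⟩
        exact main_rep _ hd _ v u _ _ (hvlen i) (hulen i) (ecount_symm (hc i))
          ((hmem i i).mpr rfl) ((hmem i j).mpr hlen.symm) hx1 hx2
    · constructor
      · rintro ⟨x, y, hx1, hx2⟩
        exact absurd (by rw [hx1, hx2]; simp) hlen
      · rintro ⟨x, y, hx1, hx2⟩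
        exact absurd ((ha i j).mpr (by rw [hx1, hx2]; simp)) hlen

end Thm

/-- The equivalence `≡_{k,ℓ}` on `k`-tuples of words over an alphabet `V` with
`|V| = n`: (a) corresponding components have equal length on the `u`-side iff they do
on the `v`-side; (b) each component is either equal on both sides or of length at
least `n^(k+ℓ+1)` on both sides; (c) for each `i`, the convolutions of the components
of equal length (taken in the order of their indices) satisfy `≡_{n^(ℓ+1)}`. -/
def TupEquiv {V : Type} [DecidableEq V] (n : ℕ) {k : ℕ} (ℓ : ℕ)
    (u v : Fin k → List V) : Prop :=
  (∀ i j, ((u i).length = (u j).length ↔ (v i).length = (v j).length)) ∧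
  (∀ i, u i = v i ∨ (n ^ (k + ℓ + 1) ≤ (u i).length ∧ n ^ (k + ℓ + 1) ≤ (v i).length)) ∧
  (∀ i, ecount (n ^ (ℓ + 1))
    (conv (((List.finRange k).filter fun j => (u j).length == (u i).length).map u)
      (u i).length)
    (conv (((List.finRange k).filter fun j => (u j).length == (u i).length).map v)
      (v i).length))

open FirstOrder

/-- The relation symbols of the signature of labelled graphs with action set `S`:
one binary relation symbol for every action. -/
def graphRelations (S : Type) : ℕ → Type
  | 2 => S
  | _ => Empty

/-- The first-order language of labelled graphs with action set `S`:
equality (built-in) and a binary relation symbol for every `a ∈ S`. -/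
def graphLang (S : Type) : FirstOrder.Language :=
  { Functions := fun _ => Empty
    Relations := graphRelations S }

/-- The labelled graph `G` (with node set `V` and action set `S`) as a first-order
structure for the language `graphLang S`. -/
def graphStructure {S : Type} {V : Type*} (G : S → V → V → Prop) :
    (graphLang S).Structure V where
  funMap := fun f _ => Empty.elim f
  RelMap := fun {n} r xs =>
    match n, r with
    | 2, a => G a (xs 0) (xs 1)
    | 0, r => Empty.elim r
    | 1, r => Empty.elim r
    | _+3, r => Empty.elim r

/-- The quantifier rank of a first-order formula. -/
def qr {L : FirstOrder.Language} {α : Type*} : {n : ℕ} → L.BoundedFormula α n → ℕ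
  | _, Language.BoundedFormula.falsum => 0
  | _, Language.BoundedFormula.equal _ _ => 0
  | _, Language.BoundedFormula.rel _ _ => 0
  | _, Language.BoundedFormula.imp φ ψ => max (qr φ) (qr ψ)
  | _, Language.BoundedFormula.all φ => qr φ + 1

/-- `realizeIn G φ as` holds iff the formula `φ` (over the signature of labelled graphs
with action set `S`) is true in the labelled graph `G` under the variable assignment `as`. -/
def realizeIn {S : Type} {V : Type*} (G : S → V → V → Prop) {α : Type}
    (φ : (graphLang S).Formula α) (as : α → V) : Prop :=
  have : (graphLang S).Structure V := graphStructure G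
  φ.Realize as

section FO
variable {V : Type} [DecidableEq V]

lemma term_var {k : ℕ} (S0 : Type) (t : (graphLang S0).Term (Fin k ⊕ Fin 0)) :
    ∃ i : Fin k, t = FirstOrder.Language.Term.var (Sum.inl i) := by
  cases t with
  | var w =>
    rcases w with i | f
    · exact ⟨i, rfl⟩
    · exact f.elim0
  | func f ts => exact (f : Empty).elim

lemma lift_iff (p : V × V) (w w' : List V) :
    liftRel (fun (p : V × V) (s s' : V) => s = p.1 ∧ s' = p.2) p w w' ↔
      ∃ x y, w = x ++ p.1 :: y ∧ w' = x ++ p.2 :: y := by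
  constructor
  · rintro ⟨x, y, s, s', ⟨rfl, rfl⟩, rfl, rfl⟩; exact ⟨x, y, rfl, rfl⟩
  · rintro ⟨x, y, h1, h2⟩; exact ⟨x, y, p.1, p.2, ⟨rfl, rfl⟩, h1, h2⟩

lemma part3 {k : ℕ} (u v : Fin k → List V)
    (p1 : ∀ i j, u i = u j ↔ v i = v j)
    (p2 : ∀ i j, ∀ a b : V,
      ((∃ x y : List V, u i = x ++ a :: y ∧ u j = x ++ b :: y) ↔
        (∃ x y : List V, v i = x ++ a :: y ∧ v j = x ++ b :: y)))
    (φ : (graphLang (V × V)).Formula (Fin k)) (hφ : φ.IsQF) :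
    (realizeIn (liftRel fun (p : V × V) (s s' : V) => s = p.1 ∧ s' = p.2) φ u ↔
      realizeIn (liftRel fun (p : V × V) (s s' : V) => s = p.1 ∧ s' = p.2) φ v) := by
  letI inst : (graphLang (V × V)).Structure (List V) :=
    graphStructure (liftRel fun (p : V × V) (s s' : V) => s = p.1 ∧ s' = p.2)
  have main3 : ∀ ψ : (graphLang (V × V)).BoundedFormula (Fin k) 0, ψ.IsQF →
      ∀ xs : Fin 0 → List V, ((ψ.Realize u xs : Prop) ↔ ψ.Realize v xs) := by
    intro ψ hψ
    induction hψ with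
    | falsum => exact fun _ => Iff.rfl
    | of_isAtomic h =>
      intro xs
      cases h with
      | equal t₁ t₂ =>
        obtain ⟨i₁, rfl⟩ := term_var _ t₁
        obtain ⟨i₂, rfl⟩ := term_var _ t₂
        simp only [Language.BoundedFormula.realize_bdEqual, Language.Term.realize_var,
          Sum.elim_inl]
        exact p1 i₁ i₂
      | @rel l R ts =>
        rcases l with _ | _ | _ | l
        · exact (R : Empty).elim
        · exact (R : Empty).elim
        · obtain ⟨i₁, e₁⟩ := term_var _ (ts 0)
          obtain ⟨i₂, e₂⟩ := term_var _ (ts 1)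
          rw [Language.BoundedFormula.realize_rel, Language.BoundedFormula.realize_rel]
          show liftRel _ R (Language.Term.realize _ (ts 0)) (Language.Term.realize _ (ts 1)) ↔
            liftRel _ R (Language.Term.realize _ (ts 0)) (Language.Term.realize _ (ts 1))
          rw [e₁, e₂]
          simp only [Language.Term.realize_var, Sum.elim_inl]
          refine (lift_iff (V := V) (R : V × V) _ _).trans (Iff.trans ?_ (lift_iff (V := V) (R : V × V) _ _).symm)
          exact p2 i₁ i₂ R.1 R.2
        · exact (R : Empty).elim
    | imp h₁ h₂ ih₁ ih₂ => exact fun xs => imp_congr (ih₁ xs) (ih₂ xs)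
  exact main3 φ hφ _

end FO

/-- Let `V` be a finite alphabet with `|V| = n ≥ 2` and suppose
`(u_1,…,u_k) ≡_{k,0} (v_1,…,v_k)`. Then (1) `u_i = u_j` iff `v_i = v_j`; (2) `u_j` is
obtained from `u_i` by replacing a single occurrence of `a` by `b` iff `v_j` is so
obtained from `v_i`; consequently (3) the two tuples satisfy the same quantifier-free
first-order formulas in the labelled graph `G⁺`, where `G` is the labelled graph on
`V` with action set `V × V` and edges `a →^{(a,b)} b`. -/
theorem stmt14 (V : Type) [Fintype V] [DecidableEq V] (n : ℕ)
    (hn : Fintype.card V = n) (h2 : 2 ≤ n) (k : ℕ)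
    (u v : Fin k → List V) (h : TupEquiv n 0 u v) :
    (∀ i j, u i = u j ↔ v i = v j) ∧
    (∀ i j, ∀ a b : V,
      ((∃ x y : List V, u i = x ++ a :: y ∧ u j = x ++ b :: y) ↔
        (∃ x y : List V, v i = x ++ a :: y ∧ v j = x ++ b :: y))) ∧
    (∀ φ : (graphLang (V × V)).Formula (Fin k), φ.IsQF →
      (realizeIn (liftRel fun (p : V × V) (s s' : V) => s = p.1 ∧ s' = p.2) φ u ↔
        realizeIn (liftRel fun (p : V × V) (s s' : V) => s = p.1 ∧ s' = p.2) φ v)) := by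
  obtain ⟨ha, hb, hc⟩ := h
  obtain ⟨p1, p2⟩ := parts12 n h2 k u v ha hc
  exact ⟨p1, p2, fun φ hφ => part3 u v p1 p2 φ hφ⟩
end

section
/- Let Γ be a finite alphabet with |Γ| = n ≥ 1 and let α ≥ 1. Let u ∈ Γ^* be a word with |u| ≥ α·n and let λ ∈ ℕ with λ ≥ α·n. Then there exists a word v ∈ Γ^* with |v| = λ and u ≡_α v. -/
/-- Let `Γ` be a finite alphabet with `|Γ| = n ≥ 1` and `α ≥ 1`.
For every word `u ∈ Γ*` with `|u| ≥ α·n` and every `λ ≥ α·n` there is a word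
`v ∈ Γ*` with `|v| = λ` and `u ≡_α v`. -/
theorem stmt17 (Γ : Type) [Fintype Γ] [DecidableEq Γ] (n : ℕ)
    (hn : Fintype.card Γ = n) (h1 : 1 ≤ n) (α : ℕ) (hα : 1 ≤ α)
    (u : List Γ) (hu : α * n ≤ u.length) (lam : ℕ) (hlam : α * n ≤ lam) :
    ∃ v : List Γ, v.length = lam ∧ ecount α u v := by
  -- total count identity
  have hlen : ∑ a : Γ, u.count a = u.length := by
    have := Multiset.sum_count_eq_card (s := (Finset.univ : Finset Γ))
      (m := (u : Multiset Γ)) (fun a _ => Finset.mem_univ a)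
    simpa using this
  -- pigeonhole: some letter occurs at least α times
  have ⟨a₀, ha₀⟩ : ∃ a₀ : Γ, α ≤ u.count a₀ := by
    by_contra h
    push_neg at h
    have : ∑ a : Γ, u.count a < ∑ _a : Γ, α := by
      apply Finset.sum_lt_sum_of_nonempty
      · exact Finset.univ_nonempty_iff.mpr (Fintype.card_pos_iff.mp (by omega))
      · exact fun a _ => h a
    simp only [Finset.sum_const, Finset.card_univ, hn, smul_eq_mul] at this
    rw [hlen, mul_comm] at this
    omega
  set S : ℕ := ∑ b ∈ Finset.univ.erase a₀, min (u.count b) α with hS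
  have hScard : (Finset.univ.erase a₀).card = n - 1 := by
    rw [Finset.card_erase_of_mem (Finset.mem_univ _), Finset.card_univ, hn]
  have hSle : S ≤ α * (n - 1) := by
    calc S ≤ ∑ _b ∈ Finset.univ.erase a₀, α :=
          Finset.sum_le_sum fun b _ => min_le_right _ _
      _ = α * (n - 1) := by rw [Finset.sum_const, hScard, smul_eq_mul, mul_comm]
  have hSlam : S + α ≤ lam := by
    have : α * (n - 1) + α ≤ α * n := by
      cases n with
      | zero => omega
      | succ m => simp [Nat.mul_succ]
    omega
  -- the target count function
  set f : Γ → ℕ := fun a => if a = a₀ then lam - S else min (u.count a) α with hf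
  have hfa₀ : α ≤ f a₀ := by simp only [hf, if_pos rfl]; omega
  have hsumf : ∑ a : Γ, f a = lam := by
    rw [← Finset.add_sum_erase _ f (Finset.mem_univ a₀)]
    have : ∑ b ∈ Finset.univ.erase a₀, f b = S := by
      apply Finset.sum_congr rfl
      intro b hb
      simp only [hf, if_neg (Finset.ne_of_mem_erase hb)]
    rw [this]
    simp only [hf, if_pos rfl]
    omega
  -- build v as a multiset then a list
  set M : Multiset Γ := ∑ a : Γ, (f a) • ({a} : Multiset Γ) with hM
  have hMcount : ∀ b : Γ, M.count b = f b := by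
    intro b
    rw [hM, Multiset.count_sum']
    have : ∀ a : Γ, Multiset.count b ((f a) • ({a} : Multiset Γ))
        = if a = b then f a else 0 := by
      intro a
      rw [Multiset.count_nsmul, Multiset.count_singleton]
      split <;> split <;> simp_all
    simp_rw [this]
    simp
  refine ⟨M.toList, ?_, ?_⟩
  · have : Multiset.card M = lam := by
      rw [hM]
      simp [hsumf]
    rw [← this]
    exact Multiset.length_toList M
  · intro a
    have hcv : M.toList.count a = f a := by
      rw [← Multiset.coe_count, Multiset.coe_toList, hMcount]
    rw [hcv]
    by_cases h : a = a₀
    · subst h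
      exact Or.inr ⟨ha₀, hfa₀⟩
    · simp only [hf, if_neg h]
      rcases le_or_gt α (u.count a) with h' | h'
      · exact Or.inr ⟨h', le_min h' le_rfl⟩
      · exact Or.inl (min_eq_left h'.le).symm
end
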